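/- Let A be a commutative ring and suppose ω : {(i,j) : i < j} → A is a family of elements in A satisfying ω_{i,j}² = 0 for all i < j and the three-term relations ω_{i,j}·ω_{i,k} − ω_{i,j}·ω_{j,k} + ω_{i,k}·ω_{j,k} = 0 for all i < j < k. Then for any strictly increasing sequence J = (j₁,…,j_ℓ) and any r > j_ℓ: ω_{j₁,r}·ω_{j₂,r}⋯ω_{j_ℓ,r} = (−1)^ℓ · Σ_I (−1)^{d_I} · ω_{i₁,j₂}·ω_{i₂,j₃}⋯ω_{i_{ℓ−1},j_ℓ}·ω_{i_ℓ,r}, where the sum ranges over all J-admissible sequences I = (i₁,…,i_ℓ) and d_I denotes the number of distinct values appearing in I. -/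

import Mathlib

/-- `Adm ℓ J I` : the length-`ℓ` sequence `I` is `J`-admissible (0-indexed).
For `ℓ = 1`, `I` is admissible iff `I = J`; for `ℓ ≥ 2`, `I` is admissible iff
`I` is nondecreasing, its truncation is admissible for the truncation of `J`,
and the last entry of `I` equals either the previous entry of `I` or the last entry of `J`. -/
def Adm : (ℓ : ℕ) → (Fin ℓ → ℕ) → (Fin ℓ → ℕ) → Prop
  | 0, _, _ => True
  | 1, J, I => I 0 = J 0
  | (n + 2), J, I =>
      (∀ k : Fin (n + 1), I k.castSucc ≤ I k.succ) ∧
      Adm (n + 1) (fun k => J k.castSucc) (fun k => I k.castSucc) ∧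
      (I (Fin.last (n + 1)) = I ⟨n, by omega⟩ ∨ I (Fin.last (n + 1)) = J (Fin.last (n + 1)))


/-- The number of distinct values appearing in a finite sequence. -/
def distinctCount {m : ℕ} (I : Fin m → ℕ) : ℕ := (Finset.image I Finset.univ).card


lemma adm_monotone : ∀ ℓ (J I : Fin ℓ → ℕ), Adm ℓ J I → Monotone I
  | 0, _, I, _ => fun a _ _ => a.elim0
  | 1, _, I, _ => fun a b _ => le_of_eq (congrArg I (Subsingleton.elim a b))
  | (n+2), J, I, h => Fin.monotone_iff_le_succ.mpr h.1

lemma adm_le : ∀ ℓ (J I : Fin ℓ → ℕ), Monotone J → Adm ℓ J I → ∀ k, I k ≤ J k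
  | 0, _, _, _, _, k => k.elim0
  | 1, J, I, _, h, k => by
      have hk : k = 0 := Subsingleton.elim _ _
      subst hk; exact le_of_eq h
  | (n+2), J, I, hJ, h, k => by
      obtain ⟨h1, h2, h3⟩ := h
      have IH := adm_le (n+1) (fun k => J k.castSucc) (fun k => I k.castSucc)
        (fun a b hab => hJ (by simpa using hab)) h2
      induction k using Fin.lastCases with
      | last =>
          rcases h3 with h3 | h3
          · rw [h3]
            have e : (⟨n, by omega⟩ : Fin (n+2)) = (Fin.last n).castSucc := rfl
            rw [e]
            exact le_trans (IH (Fin.last n)) (hJ (le_of_lt (Fin.castSucc_lt_last _)))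
          · exact le_of_eq h3
      | cast j => exact IH j

lemma adm_finite (ℓ : ℕ) (J : Fin ℓ → ℕ) (hJ : Monotone J) :
    {I : Fin ℓ → ℕ | Adm ℓ J I}.Finite := by
  apply Set.Finite.subset (Set.Finite.pi (fun k : Fin ℓ => Set.finite_Iic (J k)))
  intro I hI
  simp only [Set.mem_pi, Set.mem_univ, Set.mem_Iic, forall_true_left]
  exact fun k => adm_le ℓ J I hJ hI k

lemma image_snoc {n : ℕ} (I : Fin (n+1) → ℕ) (a : ℕ) :
    Finset.image (Fin.snoc I a : Fin (n+2) → ℕ) Finset.univ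
      = insert a (Finset.image I Finset.univ) := by
  ext x
  simp only [Finset.mem_image, Finset.mem_insert, Finset.mem_univ, true_and]
  constructor
  · rintro ⟨k, rfl⟩
    induction k using Fin.lastCases with
    | last => left; simp
    | cast j => right; exact ⟨j, by simp⟩
  · rintro (rfl | ⟨j, rfl⟩)
    · exact ⟨Fin.last (n+1), by simp⟩
    · exact ⟨j.castSucc, by simp⟩

lemma distinct_snoc_self {n : ℕ} (I : Fin (n+1) → ℕ) :
    distinctCount (Fin.snoc I (I (Fin.last n)) : Fin (n+2) → ℕ) = distinctCount I := by
  unfold distinctCount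
  rw [image_snoc, Finset.insert_eq_of_mem (Finset.mem_image.mpr ⟨Fin.last n, Finset.mem_univ _, rfl⟩)]

lemma distinct_snoc_new {n : ℕ} (I : Fin (n+1) → ℕ) (a : ℕ) (ha : ∀ k, I k < a) :
    distinctCount (Fin.snoc I a : Fin (n+2) → ℕ) = distinctCount I + 1 := by
  unfold distinctCount
  rw [image_snoc, Finset.card_insert_of_notMem]
  intro hm
  obtain ⟨k, -, hk⟩ := Finset.mem_image.mp hm
  exact absurd hk (ne_of_lt (ha k))

lemma adm_set_split (n : ℕ) (J : Fin (n+2) → ℕ) (hJ : StrictMono J) :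
    {I : Fin (n+2) → ℕ | Adm (n+2) J I}
      = ((fun I' : Fin (n+1) → ℕ => (Fin.snoc I' (I' (Fin.last n)) : Fin (n+2) → ℕ)) ''
            {I' | Adm (n+1) (fun k => J k.castSucc) I'})
        ∪ ((fun I' : Fin (n+1) → ℕ => (Fin.snoc I' (J (Fin.last (n+1))) : Fin (n+2) → ℕ)) ''
            {I' | Adm (n+1) (fun k => J k.castSucc) I'}) := by
  have hJ' : Monotone (fun k : Fin (n+1) => J k.castSucc) :=
    fun a b hab => (hJ.monotone (by simpa using hab))
  ext I
  simp only [Set.mem_setOf_eq, Set.mem_union, Set.mem_image]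
  constructor
  · rintro ⟨h1, h2, h3⟩
    have hI : I = Fin.snoc (fun k : Fin (n+1) => I k.castSucc) (I (Fin.last (n+1))) := by
      funext k
      induction k using Fin.lastCases with
      | last => simp
      | cast j => simp
    rcases h3 with h3 | h3
    · left
      refine ⟨fun k => I k.castSucc, h2, ?_⟩
      funext k
      induction k using Fin.lastCases with
      | last => simpa using (show I (Fin.last n).castSucc = I (Fin.last (n+1)) from h3.symm)
      | cast j => simp
    · right
      refine ⟨fun k => I k.castSucc, h2, ?_⟩
      funext k
      induction k using Fin.lastCases with
      | last => simpa using h3.symm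
      | cast j => simp
  · rintro (⟨I', hI', rfl⟩ | ⟨I', hI', rfl⟩)
    · refine ⟨?_, ?_, Or.inl ?_⟩
      · intro k
        induction k using Fin.lastCases with
        | last => rw [Fin.succ_last]; simp
        | cast j =>
            have := adm_monotone _ _ _ hI' (Fin.castSucc_le_succ j)
            rw [Fin.succ_castSucc, Fin.snoc_castSucc, Fin.snoc_castSucc]; exact this
      · have : (fun k : Fin (n+1) => (Fin.snoc I' (I' (Fin.last n)) : Fin (n+2) → ℕ) k.castSucc) = I' := by
          funext k; simp
        rw [this]; exact hI'
      · have e : (⟨n, by omega⟩ : Fin (n+2)) = (Fin.last n).castSucc := rfl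
        rw [e]; simp
    · have hlt : I' (Fin.last n) < J (Fin.last (n+1)) :=
        lt_of_le_of_lt (adm_le _ _ _ hJ' hI' (Fin.last n)) (hJ (Fin.castSucc_lt_last _))
      refine ⟨?_, ?_, Or.inr ?_⟩
      · intro k
        induction k using Fin.lastCases with
        | last => rw [Fin.succ_last]; simpa using le_of_lt hlt
        | cast j =>
            have := adm_monotone _ _ _ hI' (Fin.castSucc_le_succ j)
            rw [Fin.succ_castSucc, Fin.snoc_castSucc, Fin.snoc_castSucc]; exact this
      · have : (fun k : Fin (n+1) => (Fin.snoc I' (J (Fin.last (n+1))) : Fin (n+2) → ℕ) k.castSucc) = I' := by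
          funext k; simp
        rw [this]; exact hI'
      · simp


/-- the rewriting identity.  If `ω_{i,j}² = 0` and the three-term
relations hold, then for any strictly increasing `J = (j₁,…,j_ℓ)` (here of
length `n+1`) and any `r > j_ℓ`,
`ω_{j₁,r}⋯ω_{j_ℓ,r} = (−1)^ℓ Σ_I (−1)^{d_I} ω_{i₁,j₂}⋯ω_{i_{ℓ−1},j_ℓ} ω_{i_ℓ,r}`,
the sum over all `J`-admissible sequences `I`. -/
theorem stmt_5 {A : Type*} [CommRing A] (ω : ℕ → ℕ → A)
    (hsq : ∀ i j, i < j → ω i j * ω i j = 0)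
    (h3 : ∀ i j k, i < j → j < k → ω i j * ω i k - ω i j * ω j k + ω i k * ω j k = 0)
    (n : ℕ) (J : Fin (n + 1) → ℕ) (hJ : StrictMono J) (r : ℕ)
    (hr : ∀ k, J k < r) :
    (∏ k : Fin (n + 1), ω (J k) r) =
      (-1 : A) ^ (n + 1) *
        ∑ᶠ I ∈ {I : Fin (n + 1) → ℕ | Adm (n + 1) J I},
          ((-1 : A) ^ distinctCount I *
            ((∏ k : Fin n, ω (I k.castSucc) (J k.succ)) * ω (I (Fin.last n)) r)) := by
  induction n with
  | zero =>
      have hset : {I : Fin 1 → ℕ | Adm 1 J I} = {(fun _ => J 0 : Fin 1 → ℕ)} := by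
        ext I
        simp only [Set.mem_setOf_eq, Set.mem_singleton_iff]
        constructor
        · intro h; funext k; rw [Subsingleton.elim k 0]; exact h
        · rintro rfl; rfl
      rw [hset, finsum_mem_singleton]
      have hd : distinctCount (fun _ => J 0 : Fin 1 → ℕ) = 1 := by
        simp [distinctCount]
      rw [hd]
      simp
  | succ n ih =>
      have hJ' : StrictMono (fun k : Fin (n+1) => J k.castSucc) :=
        fun a b hab => hJ (by simpa using hab)
      have hJ'm : Monotone (fun k : Fin (n+1) => J k.castSucc) := hJ'.monotone
      have hr' : ∀ k : Fin (n+1), (fun k : Fin (n+1) => J k.castSucc) k < r := fun k => hr _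
      have IH := ih (fun k => J k.castSucc) hJ' hr'
      rw [finsum_mem_eq_finite_toFinset_sum _ (adm_finite (n+1) (fun k => J k.castSucc) hJ'm)] at IH
      rw [finsum_mem_eq_finite_toFinset_sum _ (adm_finite (n+2) J hJ.monotone)]
      rw [Fin.prod_univ_castSucc, IH]
      have hTeq : (adm_finite (n+2) J hJ.monotone).toFinset
          = ((adm_finite (n+1) (fun k => J k.castSucc) hJ'm).toFinset.image
                (fun I' : Fin (n+1) → ℕ => (Fin.snoc I' (I' (Fin.last n)) : Fin (n+2) → ℕ)))
            ∪ ((adm_finite (n+1) (fun k => J k.castSucc) hJ'm).toFinset.image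
                (fun I' : Fin (n+1) → ℕ => (Fin.snoc I' (J (Fin.last (n+1))) : Fin (n+2) → ℕ))) := by
        ext I
        have := Set.ext_iff.mp (adm_set_split n J hJ) I
        simp only [Set.Finite.mem_toFinset, Finset.mem_union, Finset.mem_image,
          Set.mem_setOf_eq] at this ⊢
        simpa [Set.mem_union, Set.mem_image] using this
      have hinj : ∀ a b : ℕ → ℕ, True := fun _ _ => trivial
      have snoc_inj : ∀ (x y : Fin (n+1) → ℕ) (a b : ℕ),
          (Fin.snoc x a : Fin (n+2) → ℕ) = Fin.snoc y b → x = y := by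
        intro x y a b h
        funext k
        have := congrFun h k.castSucc
        simpa using this
      have hdisj : Disjoint
          ((adm_finite (n+1) (fun k => J k.castSucc) hJ'm).toFinset.image
                (fun I' : Fin (n+1) → ℕ => (Fin.snoc I' (I' (Fin.last n)) : Fin (n+2) → ℕ)))
          ((adm_finite (n+1) (fun k => J k.castSucc) hJ'm).toFinset.image
                (fun I' : Fin (n+1) → ℕ => (Fin.snoc I' (J (Fin.last (n+1))) : Fin (n+2) → ℕ))) := by
        rw [Finset.disjoint_left]
        rintro x hx1 hx2
        obtain ⟨I1, hI1, rfl⟩ := Finset.mem_image.mp hx1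
        obtain ⟨I2, hI2, heq⟩ := Finset.mem_image.mp hx2
        rw [Set.Finite.mem_toFinset, Set.mem_setOf_eq] at hI1 hI2
        have h1 : (Fin.snoc I1 (I1 (Fin.last n)) : Fin (n+2) → ℕ) (Fin.last (n+1))
            = I1 (Fin.last n) := by simp
        have h2 : (Fin.snoc I2 (J (Fin.last (n+1))) : Fin (n+2) → ℕ) (Fin.last (n+1))
            = J (Fin.last (n+1)) := by simp
        rw [heq, h1] at h2
        have hle : I1 (Fin.last n) < J (Fin.last (n+1)) :=
          lt_of_le_of_lt (adm_le _ _ _ hJ'm hI1 (Fin.last n)) (hJ (Fin.castSucc_lt_last _))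
        omega
      rw [hTeq, Finset.sum_union hdisj,
        Finset.sum_image (fun x _ y _ h => snoc_inj x y _ _ h),
        Finset.sum_image (fun x _ y _ h => snoc_inj x y _ _ h)]
      rw [← Finset.sum_add_distrib, Finset.mul_sum, Finset.mul_sum, Finset.sum_mul]
      refine Finset.sum_congr rfl fun I' hI'mem => ?_
      rw [Set.Finite.mem_toFinset, Set.mem_setOf_eq] at hI'mem
      have hlt1 : I' (Fin.last n) < J (Fin.last (n+1)) :=
        lt_of_le_of_lt (adm_le _ _ _ hJ'm hI'mem (Fin.last n)) (hJ (Fin.castSucc_lt_last _))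
      have hlt2 : J (Fin.last (n+1)) < r := hr _
      have e := h3 (I' (Fin.last n)) (J (Fin.last (n+1))) r hlt1 hlt2
      have hd1 : distinctCount (Fin.snoc I' (I' (Fin.last n)) : Fin (n+2) → ℕ)
          = distinctCount I' := distinct_snoc_self I'
      have hd2 : distinctCount (Fin.snoc I' (J (Fin.last (n+1))) : Fin (n+2) → ℕ)
          = distinctCount I' + 1 :=
        distinct_snoc_new I' _ (fun k =>
          lt_of_le_of_lt (adm_le _ _ _ hJ'm hI'mem k) (hJ (Fin.castSucc_lt_last _)))
      have hprod : ∀ a : ℕ,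
          (∏ k : Fin (n+1), ω ((Fin.snoc I' a : Fin (n+2) → ℕ) k.castSucc) (J k.succ))
            = (∏ k : Fin n, ω (I' k.castSucc) (J k.succ.castSucc))
              * ω (I' (Fin.last n)) (J (Fin.last (n+1))) := by
        intro a
        rw [Fin.prod_univ_castSucc]
        congr 1
        · refine Finset.prod_congr rfl fun k _ => ?_
          rw [Fin.snoc_castSucc, Fin.succ_castSucc]
        · rw [Fin.snoc_castSucc, Fin.succ_last]
      rw [hd1, hd2, hprod, hprod, Fin.snoc_last, Fin.snoc_last]
      linear_combination ((-1:A)^(n+1) * (-1:A)^(distinctCount I')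
        * (∏ k : Fin n, ω (I' k.castSucc) (J k.succ.castSucc))) * e
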